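/- The 13 points in R² consisting of the 12 vertices (cos(πk/6), sin(πk/6)), k = 0,...,11, of a regular 12-gon together with its center (0,0) form a 6-distance set: the set of pairwise distances has cardinality exactly 6. -/

import Mathlib

open Real

private lemma abs_sin_reduce (d : ℤ) (hd : ¬ (12 : ℤ) ∣ d) :
    ∃ m : ℕ, 1 ≤ m ∧ m ≤ 6 ∧ |Real.sin (π * d / 12)| = Real.sin (π * m / 12) := by
  set q := d / 12 with hq
  set e := d % 12 with he
  have hde : d = 12 * q + e := (Int.mul_ediv_add_emod d 12).symm
  have he0 : 0 ≤ e := Int.emod_nonneg d (by norm_num)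
  have he12 : e < 12 := Int.emod_lt_of_pos d (by norm_num)
  have hene : e ≠ 0 := by
    intro h
    exact hd (Int.dvd_of_emod_eq_zero (by rw [← he, h]))
  have harg : π * d / 12 = π * e / 12 + q * π := by
    rw [hde]; push_cast; ring
  have habs : |Real.sin (π * d / 12)| = |Real.sin (π * e / 12)| := by
    rw [harg, Real.sin_add_int_mul_pi, abs_mul]
    rcases Int.even_or_odd q with h | h
    · rw [h.neg_one_zpow]; simp
    · rw [Odd.neg_one_zpow h]; simp
  have hnn : 0 ≤ Real.sin (π * e / 12) := by
    apply Real.sin_nonneg_of_nonneg_of_le_pi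
    · positivity
    · rw [div_le_iff₀ (by norm_num)]
      nlinarith [Real.pi_pos, (by exact_mod_cast he12.le : (e : ℝ) ≤ 12)]
  rw [habs, abs_of_nonneg hnn]
  by_cases hle : e ≤ 6
  · refine ⟨e.toNat, by omega, by omega, ?_⟩
    have hcast : ((e.toNat : ℕ) : ℝ) = (e : ℝ) := by
      exact_mod_cast congrArg (Int.cast : ℤ → ℝ) (Int.toNat_of_nonneg he0)
    rw [hcast]
  · refine ⟨(12 - e).toNat, by omega, by omega, ?_⟩
    have hcast : (((12 - e).toNat : ℕ) : ℝ) = 12 - (e : ℝ) := by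
      exact_mod_cast congrArg (Int.cast : ℤ → ℝ)
        (Int.toNat_of_nonneg (by omega : (0:ℤ) ≤ 12 - e))
    rw [hcast, show π * (12 - (e:ℝ)) / 12 = π - π * e / 12 by ring, Real.sin_pi_sub]

open Real in
/-- The 12 vertices `(cos(πk/6), sin(πk/6))`, `k = 0, …, 11`, of a regular 12-gon together
with the center `(0,0)` form a 13-point 6-distance set in the plane. -/
theorem regular_12gon_with_center_six_distance (p : Fin 12 → EuclideanSpace ℝ (Fin 2))
    (hp : ∀ k, ∀ i, p k i = ![cos (π * k.val / 6), sin (π * k.val / 6)] i)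
    (X : Set (EuclideanSpace ℝ (Fin 2))) (hX : X = insert 0 (Set.range p)) :
    X.ncard = 13 ∧
      ({r : ℝ | ∃ x ∈ X, ∃ y ∈ X, x ≠ y ∧ dist x y = r}).ncard = 6 := by
  have hdist : ∀ j k : Fin 12,
      dist (p j) (p k) = 2 * |Real.sin (π * (((j.val : ℤ) : ℝ) - ((k.val : ℤ) : ℝ)) / 12)| := by
    intro j k
    rw [EuclideanSpace.dist_eq, Fin.sum_univ_two]
    rw [hp j 0, hp j 1, hp k 0, hp k 1]
    simp only [Matrix.cons_val_zero, Matrix.cons_val_one, Matrix.head_cons, Real.dist_eq]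
    rw [sq_abs, sq_abs]
    set a : ℝ := π * j.val / 6 with ha
    set b : ℝ := π * k.val / 6 with hb
    have key : (cos a - cos b) ^ 2 + (sin a - sin b) ^ 2
        = (2 * |Real.sin ((a - b) / 2)|) ^ 2 := by
      rw [mul_pow, sq_abs]
      have h1 := Real.sin_sq_eq_half_sub ((a - b) / 2)
      have h2 := Real.cos_sub a b
      have h3 := Real.sin_sq_add_cos_sq a
      have h4 := Real.sin_sq_add_cos_sq b
      have h5 : 2 * ((a - b) / 2) = a - b := by ring
      rw [h5] at h1
      nlinarith [h1, h2, h3, h4]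
    rw [key, Real.sqrt_sq (by positivity)]
    have harg : (a - b) / 2 = π * (((j.val : ℤ) : ℝ) - ((k.val : ℤ) : ℝ)) / 12 := by
      rw [ha, hb]; push_cast; ring
    rw [harg]
  have hdist0 : ∀ k : Fin 12, dist (p k) 0 = 1 := by
    intro k
    rw [EuclideanSpace.dist_eq, Fin.sum_univ_two]
    rw [hp k 0, hp k 1]
    simp only [Matrix.cons_val_zero, Matrix.cons_val_one, Matrix.head_cons, Real.dist_eq]
    have h0 : (0 : EuclideanSpace ℝ (Fin 2)) 0 = 0 := rfl
    have h1 : (0 : EuclideanSpace ℝ (Fin 2)) 1 = 0 := rfl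
    rw [h0, h1, sub_zero, sub_zero, sq_abs, sq_abs, add_comm, Real.sin_sq_add_cos_sq]
    exact Real.sqrt_one
  have hpos : ∀ m : ℕ, 1 ≤ m → m ≤ 6 → 0 < Real.sin (π * m / 12) := by
    intro m h1 h6
    apply Real.sin_pos_of_pos_of_lt_pi
    · have : (1 : ℝ) ≤ m := by exact_mod_cast h1
      nlinarith [Real.pi_pos]
    · have : (m : ℝ) ≤ 6 := by exact_mod_cast h6
      nlinarith [Real.pi_pos]
  have hnd : ∀ j k : Fin 12, j ≠ k → ¬ (12 : ℤ) ∣ ((j.val : ℤ) - k.val) := by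
    intro j k hjk ⟨c, hc⟩
    have hj := j.isLt; have hk := k.isLt
    have : c = 0 := by omega
    rw [this, mul_zero] at hc
    exact hjk (Fin.ext (by omega))
  have hdist' : ∀ j k : Fin 12, j ≠ k → ∃ m : ℕ, 1 ≤ m ∧ m ≤ 6 ∧
      dist (p j) (p k) = 2 * Real.sin (π * m / 12) := by
    intro j k hjk
    obtain ⟨m, h1, h6, hm⟩ := abs_sin_reduce _ (hnd j k hjk)
    push_cast at hm
    exact ⟨m, h1, h6, by rw [hdist]; push_cast; rw [hm]⟩
  have hne : ∀ j k : Fin 12, j ≠ k → p j ≠ p k := by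
    intro j k hjk
    obtain ⟨m, h1, h6, hm⟩ := hdist' j k hjk
    have hd0 : dist (p j) (p k) ≠ 0 := by
      rw [hm]
      have := hpos m h1 h6
      positivity
    exact fun h => hd0 (by rw [h, dist_self])
  have hinj : Function.Injective p := fun j k h => by
    by_contra hjk; exact hne j k hjk h
  have h0nr : (0 : EuclideanSpace ℝ (Fin 2)) ∉ Set.range p := by
    rintro ⟨k, hk⟩
    have := hdist0 k
    rw [hk, dist_self] at this
    norm_num at this
  constructor
  · rw [hX, Set.ncard_insert_of_notMem h0nr (Set.finite_range p),
      ← Set.image_univ, Set.ncard_image_of_injective _ hinj, Set.ncard_univ,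
      Nat.card_eq_fintype_card, Fintype.card_fin]
  · have hone : 2 * Real.sin (π * ((2 : ℕ) : ℝ) / 12) = 1 := by
      rw [show (π * ((2:ℕ):ℝ) / 12 : ℝ) = π / 6 by push_cast; ring, Real.sin_pi_div_six]
      norm_num
    have hset : {r : ℝ | ∃ x ∈ X, ∃ y ∈ X, x ≠ y ∧ dist x y = r}
        = (fun m : ℕ => 2 * Real.sin (π * m / 12)) '' Set.Icc 1 6 := by
      ext r
      simp only [Set.mem_setOf_eq, Set.mem_image, Set.mem_Icc]
      constructor
      · rintro ⟨x, hx, y, hy, hxy, rfl⟩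
        rw [hX] at hx hy
        rcases hx with rfl | ⟨j, rfl⟩
        · rcases hy with rfl | ⟨k, rfl⟩
          · exact absurd rfl hxy
          · exact ⟨2, ⟨by norm_num, by norm_num⟩, by rw [hone, dist_comm, hdist0]⟩
        · rcases hy with rfl | ⟨k, rfl⟩
          · exact ⟨2, ⟨by norm_num, by norm_num⟩, by rw [hone, hdist0]⟩
          · have hjk : j ≠ k := fun h => hxy (by rw [h])
            obtain ⟨m, h1, h6, hm⟩ := hdist' j k hjk
            exact ⟨m, ⟨h1, h6⟩, hm.symm⟩
      · rintro ⟨m, ⟨h1, h6⟩, rfl⟩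
        have hm12 : m < 12 := by omega
        have hmem : ∀ k : Fin 12, p k ∈ X := by
          intro k; rw [hX]; exact Set.mem_insert_iff.mpr (Or.inr ⟨k, rfl⟩)
        have hne' : (⟨m, hm12⟩ : Fin 12) ≠ 0 := by
          intro h
          have := congrArg Fin.val h
          simp only [Fin.val_zero] at this
          omega
        refine ⟨p ⟨m, hm12⟩, hmem _, p 0, hmem _, hne _ _ hne', ?_⟩
        rw [hdist]
        have harg : π * ((((⟨m, hm12⟩ : Fin 12).val : ℤ) : ℝ)
            - (((0 : Fin 12).val : ℤ) : ℝ)) / 12 = π * m / 12 := by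
          norm_num
        rw [harg, abs_of_nonneg (hpos m h1 h6).le]
    rw [hset, Set.ncard_image_of_injOn, ← Finset.coe_Icc, Set.ncard_coe_finset, Nat.card_Icc]
    intro a ha b hb hab
    simp only [Set.mem_Icc] at ha hb
    have hmem : ∀ c : ℕ, 1 ≤ c → c ≤ 6 → π * c / 12 ∈ Set.Icc (-(π/2)) (π/2) := by
      intro c h1 h6
      have hc6 : (c : ℝ) ≤ 6 := by exact_mod_cast h6
      constructor
      · have := Real.pi_pos; nlinarith
      · rw [div_le_iff₀ (by norm_num)]
        nlinarith [Real.pi_pos]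
    have heq : π * (a:ℝ) / 12 = π * b / 12 :=
      Real.injOn_sin (hmem a ha.1 ha.2) (hmem b hb.1 hb.2) (by linarith)
    have hab' : (a : ℝ) = b := by
      exact mul_left_cancel₀ Real.pi_ne_zero (by linarith)
    exact_mod_cast hab'
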